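/- Let S and X be finite alphabets with joint pmf P_{S,X}, strictly positive marginals P_S and P_X, and let X_H ⊆ X be a nonempty subset with P(X_H) = Σ_{x∈X_H} P_X(x) > 0 and P(X_H|s) = Σ_{x∈X_H} P_{X|S}(x|s). Let r_{Y|X} be any randomization mapping X_H into X_H, i.e., r_{Y|X}(y|x) ≥ 0 and Σ_{y∈X_H} r_{Y|X}(y|x) = 1 for each x ∈ X_H. Then it is impossible that for all y ∈ X_H with Σ_{x∈X_H} r_{Y|X}(y|x)P_X(x) > 0 and all s ∈ S, (Σ_{x∈X_H} r_{Y|X}(y|x)P_{X|S}(x|s)) / (Σ_{x∈X_H} r_{Y|X}(y|x)P_X(x)) < max_{s'} P(X_H|s')/P(X_H). Equivalently, the maximum lift achieved over the outputs of any randomization of X_H is at least max_{s} P(X_H|s)/P(X_H). -/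
import Mathlib


open Real BigOperators

/-- No randomization of the high-risk set can make every output lift strictly
    smaller than the merged-set max-lift. -/
theorem no_randomization_beats_merging_max {S X : Type*} [Fintype S] [Fintype X] [Nonempty S]
    (Q : S → X → ℝ) (hQnn : ∀ s x, 0 ≤ Q s x) (hQsum : ∑ s, ∑ x, Q s x = 1)
    (PS : S → ℝ) (PX : X → ℝ)
    (hPS : ∀ s, PS s = ∑ x, Q s x) (hPX : ∀ x, PX x = ∑ s, Q s x)
    (hPSpos : ∀ s, 0 < PS s) (hPXpos : ∀ x, 0 < PX x)
    (XH : Finset X) (hXH : XH.Nonempty)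
    (hPXH : 0 < ∑ x ∈ XH, PX x)
    (r : X → X → ℝ)
    (hrnn : ∀ x ∈ XH, ∀ y ∈ XH, 0 ≤ r x y)
    (hrsum : ∀ x ∈ XH, ∑ y ∈ XH, r x y = 1) :
    ¬ (∀ y ∈ XH, 0 < ∑ x ∈ XH, r x y * PX x →
        ∀ s : S,
          (∑ x ∈ XH, r x y * (Q s x / PS s)) / (∑ x ∈ XH, r x y * PX x) <
            Finset.univ.sup' Finset.univ_nonempty
              (fun s' => (∑ x ∈ XH, Q s' x / PS s') / (∑ x ∈ XH, PX x))) := by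
  intro h
  set M := Finset.univ.sup' Finset.univ_nonempty
      (fun s' => (∑ x ∈ XH, Q s' x / PS s') / (∑ x ∈ XH, PX x)) with hMdef
  obtain ⟨s0, _, hs0⟩ := Finset.exists_mem_eq_sup' (Finset.univ_nonempty (α := S))
      (fun s' => (∑ x ∈ XH, Q s' x / PS s') / (∑ x ∈ XH, PX x))
  set D : X → ℝ := fun y => ∑ x ∈ XH, r x y * PX x with hD
  set N : X → ℝ := fun y => ∑ x ∈ XH, r x y * (Q s0 x / PS s0) with hN
  have key : ∀ y ∈ XH, N y ≤ M * D y := by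
    intro y hy
    by_cases hpos : 0 < D y
    · have := h y hy hpos s0
      have := (div_lt_iff₀ hpos).mp this
      linarith
    · have hDz : D y = 0 := le_antisymm (not_lt.mp hpos) (Finset.sum_nonneg fun x hx =>
        mul_nonneg (hrnn x hx y hy) (hPXpos x).le)
      have hrz : ∀ x ∈ XH, r x y = 0 := by
        intro x hx
        have h0 : r x y * PX x = 0 := by
          have := (Finset.sum_eq_zero_iff_of_nonneg (fun x hx =>
            mul_nonneg (hrnn x hx y hy) (hPXpos x).le)).mp hDz x hx
          exact this
        rcases mul_eq_zero.mp h0 with h | h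
        · exact h
        · exact absurd h (hPXpos x).ne'
      have hNz : N y = 0 := Finset.sum_eq_zero fun x hx => by
        rw [hrz x hx, zero_mul]
      rw [hNz, hDz, mul_zero]
  -- there is some y with D y > 0
  have hDsum : ∑ y ∈ XH, D y = ∑ x ∈ XH, PX x := by
    rw [hD]
    rw [Finset.sum_comm]
    exact Finset.sum_congr rfl fun x hx => by
      rw [← Finset.sum_mul, hrsum x hx, one_mul]
  have hNsum : ∑ y ∈ XH, N y = ∑ x ∈ XH, Q s0 x / PS s0 := by
    rw [hN]
    rw [Finset.sum_comm]
    exact Finset.sum_congr rfl fun x hx => by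
      rw [← Finset.sum_mul, hrsum x hx, one_mul]
  obtain ⟨y0, hy0, hy0pos⟩ : ∃ y ∈ XH, 0 < D y := by
    by_contra hc
    push_neg at hc
    have : ∑ y ∈ XH, D y ≤ 0 := Finset.sum_nonpos hc
    rw [hDsum] at this; linarith
  have hstrict : ∑ y ∈ XH, N y < ∑ y ∈ XH, M * D y := by
    refine Finset.sum_lt_sum key ⟨y0, hy0, ?_⟩
    have := (div_lt_iff₀ hy0pos).mp (h y0 hy0 hy0pos s0)
    linarith
  rw [hNsum, ← Finset.mul_sum, hDsum, hMdef, hs0] at hstrict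
  rw [div_mul_cancel₀ _ hPXH.ne'] at hstrict
  exact lt_irrefl _ hstrict
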